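/- Let A and B be finite alphabets and let X ⊆ A × B be a subset whose coordinate projections onto A and onto B are both surjective. Let U = ⟨X⟩ be the subsemigroup of A⁺ × B⁺ generated by X, and let ker π_{A⁺} and ker π_{B⁺} be the kernel congruences on U of the projections to A⁺ and B⁺. Then ker π_{A⁺} ∘ ker π_{B⁺} = ker π_{B⁺} ∘ ker π_{A⁺} if and only if X is closed under completing rectangles: for all a, a' ∈ A and b, b' ∈ B, if (a,b), (a,b'), (a',b) ∈ X then (a',b') ∈ X. -/

import Mathlib

/-- The embedding of a pair of letters into the product of free semigroups. -/
def embedPair {A B : Type*} (p : A × B) : FreeSemigroup A × FreeSemigroup B :=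
  (FreeSemigroup.of p.1, FreeSemigroup.of p.2)

/-- The subsemigroup `⟨X⟩` of `A⁺ × B⁺` generated by a set `X ⊆ A × B` of
pairs of letters. -/
def genSubsemigroup {A B : Type*} (X : Set (A × B)) :
    Subsemigroup (FreeSemigroup A × FreeSemigroup B) :=
  Subsemigroup.closure (embedPair '' X)

/-- The kernel congruence of the projection of `⟨X⟩` onto `A⁺`, as a relation. -/
def kerFst {A B : Type*} (X : Set (A × B)) (u v : genSubsemigroup X) : Prop :=
  (u : FreeSemigroup A × FreeSemigroup B).1 = (v : FreeSemigroup A × FreeSemigroup B).1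

/-- The kernel congruence of the projection of `⟨X⟩` onto `B⁺`, as a relation. -/
def kerSnd {A B : Type*} (X : Set (A × B)) (u v : genSubsemigroup X) : Prop :=
  (u : FreeSemigroup A × FreeSemigroup B).2 = (v : FreeSemigroup A × FreeSemigroup B).2

/-- The list of letters of an element of the free semigroup. -/
def fsList {α : Type*} (x : FreeSemigroup α) : List α := x.head :: x.tail

lemma fsList_mul {α : Type*} (x y : FreeSemigroup α) :
    fsList (x * y) = fsList x ++ fsList y := rfl

lemma mem_gen_of_forall₂ {A B : Type*} (X : Set (A × B)) :
    ∀ (l1 : List A) (a : A) (b : B) (l2 : List B),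
      List.Forall₂ (fun a b => (a, b) ∈ X) (a :: l1) (b :: l2) →
      ((⟨a, l1⟩, ⟨b, l2⟩) : FreeSemigroup A × FreeSemigroup B) ∈ genSubsemigroup X := by
  intro l1
  induction l1 with
  | nil => 
    intro a b l2 h
    rcases h with _ | ⟨hab, h⟩
    cases h
    exact Subsemigroup.subset_closure ⟨(a, b), hab, rfl⟩
  | cons a' l1' ih =>
    intro a b l2 h
    rcases h with _ | ⟨hab, h⟩
    rcases l2 with _ | ⟨b', l2'⟩
    · cases h
    · have h1 : ((FreeSemigroup.of a, FreeSemigroup.of b) :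
          FreeSemigroup A × FreeSemigroup B) ∈ genSubsemigroup X :=
        Subsemigroup.subset_closure ⟨(a, b), hab, rfl⟩
      have h2 := ih a' b' l2' h
      have := Subsemigroup.mul_mem _ h1 h2
      convert this using 2 <;> rfl

lemma mem_gen_iff {A B : Type*} (X : Set (A × B)) (p : FreeSemigroup A × FreeSemigroup B) :
    p ∈ genSubsemigroup X ↔
      List.Forall₂ (fun a b => (a, b) ∈ X) (fsList p.1) (fsList p.2) := by
  constructor
  · intro hp
    induction hp using Subsemigroup.closure_induction with
    | mem q hq =>
      obtain ⟨⟨a, b⟩, hab, rfl⟩ := hq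
      exact List.Forall₂.cons hab List.Forall₂.nil
    | mul x y _ _ hx hy =>
      exact List.rel_append hx hy
  · intro h
    obtain ⟨⟨a, l1⟩, ⟨b, l2⟩⟩ := p
    exact mem_gen_of_forall₂ X l1 a b l2 h

lemma comp_iff_fst_snd {A B : Type*} (X : Set (A × B)) (u v : genSubsemigroup X) :
    Relation.Comp (kerFst X) (kerSnd X) u v ↔
      ((u : FreeSemigroup A × FreeSemigroup B).1,
       (v : FreeSemigroup A × FreeSemigroup B).2) ∈ genSubsemigroup X := by
  constructor
  · rintro ⟨w, h1, h2⟩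
    have : (w : FreeSemigroup A × FreeSemigroup B) =
        ((u : FreeSemigroup A × FreeSemigroup B).1,
         (v : FreeSemigroup A × FreeSemigroup B).2) := Prod.ext h1.symm h2
    rw [← this]; exact w.2
  · intro h
    exact ⟨⟨_, h⟩, rfl, rfl⟩

lemma comp_iff_snd_fst {A B : Type*} (X : Set (A × B)) (u v : genSubsemigroup X) :
    Relation.Comp (kerSnd X) (kerFst X) u v ↔
      ((v : FreeSemigroup A × FreeSemigroup B).1,
       (u : FreeSemigroup A × FreeSemigroup B).2) ∈ genSubsemigroup X := by
  constructor
  · rintro ⟨w, h1, h2⟩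
    have : (w : FreeSemigroup A × FreeSemigroup B) =
        ((v : FreeSemigroup A × FreeSemigroup B).1,
         (u : FreeSemigroup A × FreeSemigroup B).2) := Prod.ext h2 h1.symm
    rw [← this]; exact w.2
  · intro h
    exact ⟨⟨_, h⟩, rfl, rfl⟩

lemma rect_step {A B : Type*} (X : Set (A × B))
    (hrect : ∀ (a a' : A) (b b' : B),
      (a, b) ∈ X → (a, b') ∈ X → (a', b) ∈ X → (a', b') ∈ X)
    (u v : genSubsemigroup X)
    (h : ((u : FreeSemigroup A × FreeSemigroup B).1,
          (v : FreeSemigroup A × FreeSemigroup B).2) ∈ genSubsemigroup X) :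
    ((v : FreeSemigroup A × FreeSemigroup B).1,
     (u : FreeSemigroup A × FreeSemigroup B).2) ∈ genSubsemigroup X := by
  have hu := (mem_gen_iff X _).mp u.2
  have hv := (mem_gen_iff X _).mp v.2
  have huv := (mem_gen_iff X _).mp h
  rw [mem_gen_iff]
  dsimp only at huv ⊢
  rw [List.forall₂_iff_get] at hu hv huv ⊢
  obtain ⟨hul, hu⟩ := hu
  obtain ⟨hvl, hv⟩ := hv
  obtain ⟨huvl, huv⟩ := huv
  refine ⟨by omega, fun i h₁ h₂ => ?_⟩
  exact hrect _ _ _ _ (huv i (by omega) (by omega)) (hu i (by omega) (by omega))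
    (hv i (by omega) (by omega))

/-- for `X ⊆ A × B` with surjective coordinate projections, the
kernel congruences of the projections of `⟨X⟩ ≤ A⁺ × B⁺` commute under
relational composition if and only if `X` is closed under completing rectangles. -/
theorem stmt15 {A B : Type} [Finite A] [Finite B] (X : Set (A × B))
    (hA : ∀ a : A, ∃ b : B, (a, b) ∈ X) (hB : ∀ b : B, ∃ a : A, (a, b) ∈ X) :
    Relation.Comp (kerFst X) (kerSnd X) = Relation.Comp (kerSnd X) (kerFst X) ↔
      ∀ (a a' : A) (b b' : B),
        (a, b) ∈ X → (a, b') ∈ X → (a', b) ∈ X → (a', b') ∈ X := by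
  constructor
  · intro h a a' b b' hab hab' ha'b
    set u : genSubsemigroup X :=
      ⟨embedPair (a, b'), Subsemigroup.subset_closure ⟨(a, b'), hab', rfl⟩⟩
    set v : genSubsemigroup X :=
      ⟨embedPair (a', b), Subsemigroup.subset_closure ⟨(a', b), ha'b, rfl⟩⟩
    have h1 : Relation.Comp (kerFst X) (kerSnd X) u v := by
      rw [comp_iff_fst_snd]
      exact Subsemigroup.subset_closure ⟨(a, b), hab, rfl⟩
    rw [h, comp_iff_snd_fst] at h1
    have := (mem_gen_iff X _).mp h1
    rcases this with _ | ⟨hx, _⟩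
    exact hx
  · intro hrect
    funext u v
    rw [eq_iff_iff, comp_iff_fst_snd, comp_iff_snd_fst]
    exact ⟨rect_step X hrect u v, rect_step X hrect v u⟩
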